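/- arXiv:1909.08568 — 3 statements merged into one kernel-verified Lean document; each statement's English description precedes it below -/
import Mathlib

section
/- Let p ≥ 5 be prime, and let vertices of M₃(p) be classes [a:c] of nonzero pairs in (Z/p)² modulo ±1, with adjacency [a:c] ~ [b:d] iff ad - bc = ±1 in Z/p. Then two distinct vertices [a:c], [b:d] with Δ = ad - bc satisfy: graph distance 1 iff Δ = ±1; graph distance 2 iff Δ ∉ {0, 1, -1}; and graph distance 3 iff Δ = 0. -/
/-- Nonzero pairs over `ZMod p`. -/
def FPair (p : ℕ) : Type := {v : ZMod p × ZMod p // v ≠ 0}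

/-- The equivalence identifying `v` with `-v`. -/
def fareySetoid (p : ℕ) : Setoid (FPair p) where
  r v w := w.1 = v.1 ∨ w.1 = -v.1
  iseqv := by
    refine ⟨fun v => Or.inl rfl, ?_, ?_⟩
    · rintro v w (h | h)
      · exact Or.inl h.symm
      · exact Or.inr (by rw [h, neg_neg])
    · rintro u v w (h1 | h1) (h2 | h2)
      · exact Or.inl (h2.trans h1)
      · exact Or.inr (by rw [h2, h1])
      · exact Or.inr (h2.trans (by rw [h1]))
      · exact Or.inl (by rw [h2, h1, neg_neg])

/-- Vertices of the Farey map `M₃(p)`: nonzero pairs mod `±1`. -/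
def FV (p : ℕ) : Type := Quotient (fareySetoid p)

def det₂ {p : ℕ} (v w : ZMod p × ZMod p) : ZMod p := v.1 * w.2 - w.1 * v.2

/-- The Farey graph `M₃(p)`: `[a:c] ~ [b:d]` iff `a*d - b*c = ±1`. -/
def FGraph (p : ℕ) : SimpleGraph (FV p) where
  Adj x y := x ≠ y ∧ ∃ v w : FPair p,
      x = Quotient.mk (fareySetoid p) v ∧ y = Quotient.mk (fareySetoid p) w ∧
      (det₂ v.1 w.1 = 1 ∨ det₂ v.1 w.1 = -1)
  symm := ⟨by
    rintro x y ⟨hxy, v, w, hx, hy, h⟩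
    refine ⟨hxy.symm, w, v, hy, hx, ?_⟩
    have : det₂ w.1 v.1 = -det₂ v.1 w.1 := by unfold det₂; ring
    rcases h with h | h
    · exact Or.inr (by rw [this, h])
    · exact Or.inl (by rw [this, h, neg_neg])⟩
  loopless := ⟨fun x h => h.1 rfl⟩

/-- `[a : c]` as a vertex of `M₃(p)` (with a junk default for the zero pair). -/
noncomputable def fvq (p : ℕ) [Fact p.Prime] (a c : ZMod p) : FV p :=
  if h : ((a, c) : ZMod p × ZMod p) ≠ 0 then Quotient.mk (fareySetoid p) ⟨(a, c), h⟩
  else Quotient.mk (fareySetoid p) ⟨(1, 0), by simp [Prod.ext_iff]⟩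

namespace FareyAux

variable {p : ℕ}

lemma det₂_neg_left (x y : ZMod p × ZMod p) : det₂ (-x) y = -det₂ x y := by
  simp [det₂]; ring

lemma det₂_neg_right (x y : ZMod p × ZMod p) : det₂ x (-y) = -det₂ x y := by
  simp [det₂]; ring

lemma det₂_self (x : ZMod p × ZMod p) : det₂ x x = 0 := by simp [det₂]

lemma mk_eq_iff (v w : FPair p) :
    Quotient.mk (fareySetoid p) v = Quotient.mk (fareySetoid p) w ↔
      (w.1 = v.1 ∨ w.1 = -v.1) :=
  ⟨fun h => Quotient.exact h, fun h => Quotient.sound h⟩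

lemma det_sign {v v' w w' : FPair p}
    (hv : Quotient.mk (fareySetoid p) v = Quotient.mk (fareySetoid p) v')
    (hw : Quotient.mk (fareySetoid p) w = Quotient.mk (fareySetoid p) w') :
    det₂ v'.1 w'.1 = det₂ v.1 w.1 ∨ det₂ v'.1 w'.1 = -det₂ v.1 w.1 := by
  rcases (mk_eq_iff v v').mp hv with h1 | h1 <;>
    rcases (mk_eq_iff w w').mp hw with h2 | h2 <;>
      rw [h1, h2] <;> simp [det₂_neg_left, det₂_neg_right]

lemma one_ne_zero' [Fact p.Prime] (hp : 5 ≤ p) : (1 : ZMod p) ≠ 0 :=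
  one_ne_zero

lemma adj_iff [Fact p.Prime] (hp : 5 ≤ p) (v w : FPair p) :
    (FGraph p).Adj (Quotient.mk (fareySetoid p) v) (Quotient.mk (fareySetoid p) w) ↔
      (det₂ v.1 w.1 = 1 ∨ det₂ v.1 w.1 = -1) := by
  constructor
  · rintro ⟨-, v', w', hx, hy, h⟩
    rcases det_sign hx hy with he | he <;> rw [he] at h
    · exact h
    · rcases h with h | h
      · exact Or.inr (by rw [← neg_eq_iff_eq_neg.mpr h.symm])
      · exact Or.inl (by have := neg_eq_iff_eq_neg.mp h; rw [this, neg_neg])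
  · intro h
    refine ⟨?_, v, w, rfl, rfl, h⟩
    intro heq
    rcases (mk_eq_iff v w).mp heq with h1 | h1 <;> rw [h1] at h <;>
        simp only [det₂_neg_right, det₂_self, neg_zero] at h <;>
      rcases h with h | h <;> simp_all

end FareyAux

namespace FareyAux

variable {p : ℕ}

lemma mk_ne_zero {a c : ZMod p} (h : ¬(a = 0 ∧ c = 0)) :
    ((a, c) : ZMod p × ZMod p) ≠ 0 :=
  fun h0 => h ⟨congrArg Prod.fst h0, congrArg Prod.snd h0⟩

lemma fpair_ne (v : FPair p) : ¬(v.1.1 = 0 ∧ v.1.2 = 0) := by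
  intro ⟨h1, h2⟩
  exact v.2 (by rw [Prod.ext_iff]; exact ⟨h1, h2⟩)

lemma exists_scalar [Fact p.Prime] (v w : FPair p) (h : det₂ v.1 w.1 = 0) :
    ∃ l : ZMod p, l ≠ 0 ∧ w.1.1 = l * v.1.1 ∧ w.1.2 = l * v.1.2 := by
  set a := v.1.1; set c := v.1.2; set b := w.1.1; set d := w.1.2
  have h' : a * d - b * c = 0 := h
  by_cases ha : a = 0
  · have hc : c ≠ 0 := fun hc => fpair_ne v ⟨ha, hc⟩
    have hb : b = 0 := by
      have : b * c = 0 := by linear_combination -h' + d * ha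
      rcases mul_eq_zero.mp this with h | h
      · exact h
      · exact absurd h hc
    have hd : d ≠ 0 := fun hd => fpair_ne w ⟨hb, hd⟩
    exact ⟨d * c⁻¹, mul_ne_zero hd (inv_ne_zero hc), by rw [hb, ha, mul_zero],
      by field_simp⟩
  · have hb : b ≠ 0 := by
      intro hb
      have hd : d = 0 := by
        have : a * d = 0 := by linear_combination h' + c * hb
        rcases mul_eq_zero.mp this with h | h
        · exact absurd h ha
        · exact h
      exact fpair_ne w ⟨hb, hd⟩
    refine ⟨b * a⁻¹, mul_ne_zero hb (inv_ne_zero ha), by field_simp, ?_⟩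
    field_simp
    linear_combination h'

lemma exists_unimodular [Fact p.Prime] (v : FPair p) :
    ∃ u : FPair p, det₂ v.1 u.1 = 1 := by
  by_cases ha : v.1.1 = 0
  · have hc : v.1.2 ≠ 0 := fun hc => fpair_ne v ⟨ha, hc⟩
    refine ⟨⟨(-(v.1.2)⁻¹, 0), mk_ne_zero ?_⟩, ?_⟩
    · rintro ⟨h1, -⟩
      exact inv_ne_zero hc (neg_eq_zero.mp h1)
    · show v.1.1 * 0 - -(v.1.2)⁻¹ * v.1.2 = 1
      field_simp
      ring
  · refine ⟨⟨(0, (v.1.1)⁻¹), mk_ne_zero ?_⟩, ?_⟩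
    · rintro ⟨-, h2⟩
      exact inv_ne_zero ha h2
    · show v.1.1 * (v.1.1)⁻¹ - 0 * v.1.2 = 1
      field_simp
      ring

end FareyAux

namespace FareyAux

variable {p : ℕ}

open SimpleGraph

lemma dist_eq_two [Fact p.Prime] (hp : 5 ≤ p) (v w : FPair p)
    (hne : Quotient.mk (fareySetoid p) v ≠ Quotient.mk (fareySetoid p) w)
    (h0 : det₂ v.1 w.1 ≠ 0) (h1 : det₂ v.1 w.1 ≠ 1) (h2 : det₂ v.1 w.1 ≠ -1) :
    (FGraph p).dist (Quotient.mk (fareySetoid p) v) (Quotient.mk (fareySetoid p) w) = 2 := by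
  set a := v.1.1 with ha'; set c := v.1.2 with hc'
  set b := w.1.1 with hb'; set d := w.1.2 with hd'
  set Δ := det₂ v.1 w.1 with hΔ
  have hΔ' : a * d - b * c = Δ := rfl
  have hu : ((Δ⁻¹ * (a + b), Δ⁻¹ * (c + d)) : ZMod p × ZMod p) ≠ 0 := by
    apply mk_ne_zero
    rintro ⟨e1, e2⟩
    have hi : Δ⁻¹ ≠ 0 := inv_ne_zero h0
    have e1' : a + b = 0 := by
      rcases mul_eq_zero.mp e1 with h | h
      · exact absurd h hi
      · exact h
    have e2' : c + d = 0 := by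
      rcases mul_eq_zero.mp e2 with h | h
      · exact absurd h hi
      · exact h
    apply hne
    apply (mk_eq_iff v w).mpr
    right
    rw [Prod.ext_iff]
    constructor
    · show b = -a
      linear_combination e1'
    · show d = -c
      linear_combination e2'
  set u : FPair p := ⟨(Δ⁻¹ * (a + b), Δ⁻¹ * (c + d)), hu⟩ with hu'
  have hΔi : Δ * Δ⁻¹ = 1 := mul_inv_cancel₀ h0
  have adj1 : (FGraph p).Adj (Quotient.mk (fareySetoid p) v) (Quotient.mk (fareySetoid p) u) := by
    apply (adj_iff hp v u).mpr
    left
    show a * (Δ⁻¹ * (c + d)) - Δ⁻¹ * (a + b) * c = 1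
    calc a * (Δ⁻¹ * (c + d)) - Δ⁻¹ * (a + b) * c = Δ⁻¹ * (a * d - b * c) := by ring
    _ = 1 := by rw [hΔ', mul_comm, hΔi]
  have adj2 : (FGraph p).Adj (Quotient.mk (fareySetoid p) u) (Quotient.mk (fareySetoid p) w) := by
    apply (adj_iff hp u w).mpr
    left
    show Δ⁻¹ * (a + b) * d - b * (Δ⁻¹ * (c + d)) = 1
    calc Δ⁻¹ * (a + b) * d - b * (Δ⁻¹ * (c + d)) = Δ⁻¹ * (a * d - b * c) := by ring
    _ = 1 := by rw [hΔ', mul_comm, hΔi]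
  have hle : (FGraph p).dist (Quotient.mk (fareySetoid p) v) (Quotient.mk (fareySetoid p) w) ≤ 2 := by
    exact SimpleGraph.dist_le (Walk.cons adj1 (Walk.cons adj2 Walk.nil))
  have hreach : (FGraph p).Reachable (Quotient.mk (fareySetoid p) v) (Quotient.mk (fareySetoid p) w) :=
    ⟨Walk.cons adj1 (Walk.cons adj2 Walk.nil)⟩
  have hne0 : (FGraph p).dist (Quotient.mk (fareySetoid p) v) (Quotient.mk (fareySetoid p) w) ≠ 0 := by
    exact SimpleGraph.dist_ne_zero_iff_ne_and_reachable.mpr ⟨hne, hreach⟩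
  have hne1 : (FGraph p).dist (Quotient.mk (fareySetoid p) v) (Quotient.mk (fareySetoid p) w) ≠ 1 := by
    refine fun hh => ?_
    have hh := (adj_iff hp v w).mp (SimpleGraph.dist_eq_one_iff_adj.mp hh)
    revert hh
    rintro (h | h)
    · exact h1 h
    · exact h2 h
  omega

lemma dist_eq_three [Fact p.Prime] (hp : 5 ≤ p) (v w : FPair p)
    (hne : Quotient.mk (fareySetoid p) v ≠ Quotient.mk (fareySetoid p) w)
    (h0 : det₂ v.1 w.1 = 0) :
    (FGraph p).dist (Quotient.mk (fareySetoid p) v) (Quotient.mk (fareySetoid p) w) = 3 := by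
  obtain ⟨l, hl0, hb, hd⟩ := exists_scalar v w h0
  set a := v.1.1 with ha'; set c := v.1.2 with hc'
  have hl1 : l ≠ 1 := by
    rintro rfl
    exact hne ((mk_eq_iff v w).mpr (Or.inl (by rw [Prod.ext_iff]; exact ⟨by rw [hb, one_mul], by rw [hd, one_mul]⟩)))
  have hlm1 : l ≠ -1 := by
    rintro rfl
    apply hne
    apply (mk_eq_iff v w).mpr
    right
    rw [Prod.ext_iff]
    constructor
    · show w.1.1 = -a
      rw [hb]; ring
    · show w.1.2 = -c
      rw [hd]; ring
  obtain ⟨u₁, hdet1⟩ := exists_unimodular v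
  set x := u₁.1.1 with hx'; set y := u₁.1.2 with hy'
  have hdet1' : a * y - x * c = 1 := hdet1
  have hli : l * l⁻¹ = 1 := mul_inv_cancel₀ hl0
  have hu2 : ((a + l⁻¹ * x, c + l⁻¹ * y) : ZMod p × ZMod p) ≠ 0 := by
    apply mk_ne_zero
    rintro ⟨e1, e2⟩
    have : (1 : ZMod p) = 0 := by
      rw [← hdet1']
      linear_combination y * e1 - x * e2
    exact one_ne_zero this
  set u₂ : FPair p := ⟨(a + l⁻¹ * x, c + l⁻¹ * y), hu2⟩ with hu2'
  have adj1 : (FGraph p).Adj (Quotient.mk (fareySetoid p) v) (Quotient.mk (fareySetoid p) u₁) :=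
    (adj_iff hp v u₁).mpr (Or.inl hdet1)
  have adj2 : (FGraph p).Adj (Quotient.mk (fareySetoid p) u₁) (Quotient.mk (fareySetoid p) u₂) := by
    apply (adj_iff hp u₁ u₂).mpr
    right
    show x * (c + l⁻¹ * y) - (a + l⁻¹ * x) * y = -1
    linear_combination -hdet1'
  have adj3 : (FGraph p).Adj (Quotient.mk (fareySetoid p) u₂) (Quotient.mk (fareySetoid p) w) := by
    apply (adj_iff hp u₂ w).mpr
    right
    show (a + l⁻¹ * x) * w.1.2 - w.1.1 * (c + l⁻¹ * y) = -1
    rw [hb, hd]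
    have : (a + l⁻¹ * x) * (l * c) - l * a * (c + l⁻¹ * y) = (l * l⁻¹) * (x * c - a * y) := by ring
    rw [this, hli, one_mul]
    linear_combination -hdet1'
  have hle : (FGraph p).dist (Quotient.mk (fareySetoid p) v) (Quotient.mk (fareySetoid p) w) ≤ 3 := by
    exact SimpleGraph.dist_le (Walk.cons adj1 (Walk.cons adj2 (Walk.cons adj3 Walk.nil)))
  have hreach : (FGraph p).Reachable (Quotient.mk (fareySetoid p) v) (Quotient.mk (fareySetoid p) w) :=
    ⟨Walk.cons adj1 (Walk.cons adj2 (Walk.cons adj3 Walk.nil))⟩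
  have hne0 : (FGraph p).dist (Quotient.mk (fareySetoid p) v) (Quotient.mk (fareySetoid p) w) ≠ 0 := by
    exact SimpleGraph.dist_ne_zero_iff_ne_and_reachable.mpr ⟨hne, hreach⟩
  have hne1 : (FGraph p).dist (Quotient.mk (fareySetoid p) v) (Quotient.mk (fareySetoid p) w) ≠ 1 := by
    refine fun hh => ?_
    have hh := (adj_iff hp v w).mp (SimpleGraph.dist_eq_one_iff_adj.mp hh)
    revert hh
    rintro (h | h)
    · rw [h0] at h; exact one_ne_zero h.symm
    · rw [h0] at h; exact neg_ne_zero.mpr one_ne_zero h.symm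
  have hne2 : (FGraph p).dist (Quotient.mk (fareySetoid p) v) (Quotient.mk (fareySetoid p) w) ≠ 2 := by
    intro hd2
    obtain ⟨q, hq⟩ := SimpleGraph.exists_walk_of_dist_ne_zero hne0
    rw [hd2] at hq
    obtain ⟨mid, hA, q', rfl⟩ := q.exists_eq_cons_of_ne hne
    have hq' : q'.length = 1 := Nat.succ.inj hq
    have hmid : mid ≠ Quotient.mk (fareySetoid p) w := by
      rintro rfl
      have := (adj_iff hp v w).mp hA
      rcases this with h | h
      · rw [h0] at h; exact one_ne_zero h.symm
      · rw [h0] at h; exact neg_ne_zero.mpr one_ne_zero h.symm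
    obtain ⟨mid2, hB, q'', rfl⟩ := q'.exists_eq_cons_of_ne hmid
    have hq'' : q''.length = 0 := Nat.succ.inj hq'
    have hcw := SimpleGraph.Walk.eq_of_length_eq_zero hq''
    subst hcw
    obtain ⟨u, rfl⟩ := Quotient.exists_rep mid
    have dA := (adj_iff hp v u).mp hA
    have dB := (adj_iff hp u w).mp hB
    set s := u.1.1 with hs'; set t := u.1.2 with ht'
    have dB' : s * w.1.2 - w.1.1 * t = det₂ u.1 w.1 := rfl
    rw [hb, hd] at dB'
    have dA' : a * t - s * c = det₂ v.1 u.1 := rfl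
    have : l = 1 ∨ l = -1 := by
      rcases dA with eA | eA <;> rcases dB with eB | eB <;>
        rw [← dB'] at eB <;> rw [← dA'] at eA
      · right; linear_combination (-l) * eA - eB
      · left; linear_combination (-l) * eA - eB
      · left; linear_combination l * eA + eB
      · right; linear_combination l * eA + eB
    rcases this with h | h
    · exact hl1 h
    · exact hlm1 h
  omega

end FareyAux

/-- Distance theorem for `M₃(p)`, `p ≥ 5` prime: for distinct vertices `[a:c]`, `[b:d]`
with `Δ = a*d - b*c`, the graph distance is `1` iff `Δ = ±1`, `2` iff `Δ ∉ {0, ±1}`,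
and `3` iff `Δ = 0`. -/
theorem farey_distance (p : ℕ) [Fact p.Prime] (hp : 5 ≤ p) (v w : FPair p)
    (hne : Quotient.mk (fareySetoid p) v ≠ Quotient.mk (fareySetoid p) w) :
    ((FGraph p).dist (Quotient.mk (fareySetoid p) v) (Quotient.mk (fareySetoid p) w) = 1 ↔
      (det₂ v.1 w.1 = 1 ∨ det₂ v.1 w.1 = -1)) ∧
    ((FGraph p).dist (Quotient.mk (fareySetoid p) v) (Quotient.mk (fareySetoid p) w) = 2 ↔
      ¬(det₂ v.1 w.1 = 0 ∨ det₂ v.1 w.1 = 1 ∨ det₂ v.1 w.1 = -1)) ∧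
    ((FGraph p).dist (Quotient.mk (fareySetoid p) v) (Quotient.mk (fareySetoid p) w) = 3 ↔
      det₂ v.1 w.1 = 0) := by
  have h1ne0 : (1 : ZMod p) ≠ 0 := one_ne_zero
  have hm1ne0 : (-1 : ZMod p) ≠ 0 := neg_ne_zero.mpr one_ne_zero
  rcases eq_or_ne (det₂ v.1 w.1) 0 with h0 | h0
  · have hd := FareyAux.dist_eq_three hp v w hne h0
    rw [hd]
    refine ⟨⟨fun h => absurd h (by norm_num), ?_⟩,
      ⟨fun h => absurd h (by norm_num), fun h => absurd (Or.inl h0) h⟩,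
      ⟨fun _ => h0, fun _ => rfl⟩⟩
    rintro (h | h)
    · exact absurd (h0.symm.trans h).symm h1ne0
    · exact absurd (h0.symm.trans h).symm hm1ne0
  · by_cases hpm : det₂ v.1 w.1 = 1 ∨ det₂ v.1 w.1 = -1
    · have hd : (FGraph p).dist (Quotient.mk (fareySetoid p) v) (Quotient.mk (fareySetoid p) w) = 1 :=
        SimpleGraph.dist_eq_one_iff_adj.mpr ((FareyAux.adj_iff hp v w).mpr hpm)
      rw [hd]
      exact ⟨⟨fun _ => hpm, fun _ => rfl⟩,
        ⟨fun h => absurd h (by norm_num), fun h => absurd (Or.inr hpm) h⟩,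
        ⟨fun h => absurd h (by norm_num), fun h => absurd h h0⟩⟩
    · have hd := FareyAux.dist_eq_two hp v w hne h0
        (fun h => hpm (Or.inl h)) (fun h => hpm (Or.inr h))
      rw [hd]
      refine ⟨⟨fun h => absurd h (by norm_num), fun h => absurd h hpm⟩,
        ⟨fun _ => ?_, fun _ => rfl⟩,
        ⟨fun h => absurd h (by norm_num), fun h => absurd h h0⟩⟩
      rintro (h | h | h)
      · exact h0 h
      · exact hpm (Or.inl h)
      · exact hpm (Or.inr h)
end

section
/- For a prime p ≥ 5, the Farey graph M₃(p) has diameter 3. -/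
section helpers
variable {p : ℕ} [Fact p.Prime]

lemma fexact {v w : FPair p} (h : Quotient.mk (fareySetoid p) v = Quotient.mk (fareySetoid p) w) :
    w.1 = v.1 ∨ w.1 = -v.1 := Quotient.exact h

lemma fadj_mk {v w : FPair p} (h : det₂ v.1 w.1 = 1) :
    (FGraph p).Adj (Quotient.mk (fareySetoid p) v) (Quotient.mk (fareySetoid p) w) := by
  show _ ≠ _ ∧ _
  refine ⟨?_, v, w, rfl, rfl, Or.inl h⟩
  intro he
  have hz : det₂ v.1 w.1 = 0 := by
    rcases fexact he with h' | h' <;> rw [h'] <;>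
      simp only [det₂, Prod.fst_neg, Prod.snd_neg] <;> ring
  rw [hz] at h
  exact one_ne_zero h.symm

lemma fadj_elim {v : FPair p} {y : FV p}
    (h : (FGraph p).Adj (Quotient.mk (fareySetoid p) v) y) :
    ∃ w : FPair p, y = Quotient.mk (fareySetoid p) w ∧
      (det₂ v.1 w.1 = 1 ∨ det₂ v.1 w.1 = -1) := by
  change _ ≠ _ ∧ _ at h
  obtain ⟨-, v', w', hv, hw, hd⟩ := h
  refine ⟨w', hw, ?_⟩
  have hvv := fexact hv
  have : det₂ v.1 w'.1 = det₂ v'.1 w'.1 ∨ det₂ v.1 w'.1 = -det₂ v'.1 w'.1 := by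
    rcases hvv with h' | h'
    · left; simp only [h']
    · right; rw [h']; simp only [det₂, Prod.fst_neg, Prod.snd_neg]; ring
  rcases this with h' | h' <;> rcases hd with hd | hd <;> rw [h', hd] <;> simp

/-- Key construction: between any two nonzero pairs there is a chain of three
unimodular steps. -/
lemma exists_mid (v w : FPair p) : ∃ u1 u2 : FPair p,
    det₂ v.1 u1.1 = 1 ∧ det₂ u1.1 u2.1 = 1 ∧ det₂ u2.1 w.1 = 1 := by
  set a := v.1.1 with ha'
  set c := v.1.2 with hc'
  set b := w.1.1 with hb'
  set d := w.1.2 with hd'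
  obtain ⟨x, y, h1⟩ : ∃ x y : ZMod p, a * y - x * c = 1 := by
    by_cases ha : a = 0
    · have hc : c ≠ 0 := fun hc => v.2 (Prod.ext_iff.mpr ⟨ha, hc⟩)
      exact ⟨-c⁻¹, 0, by field_simp; ring⟩
    · exact ⟨0, a⁻¹, by field_simp; ring⟩
  obtain ⟨z, t, h2⟩ : ∃ z t : ZMod p, z * d - b * t = 1 := by
    by_cases hd : d = 0
    · have hb : b ≠ 0 := fun hb => w.2 (Prod.ext_iff.mpr ⟨hb, hd⟩)
      exact ⟨0, -b⁻¹, by field_simp; ring⟩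
    · exact ⟨d⁻¹, 0, by field_simp; ring⟩
  obtain ⟨lam, mu, hkey⟩ : ∃ lam mu : ZMod p,
      (x + lam * a) * (t + mu * d) - (z + mu * b) * (y + lam * c) = 1 := by
    by_cases hΔ : a * d - b * c = 0
    · have hA : x * d - b * y ≠ 0 := by
        intro hA
        have hb : b = 0 := by linear_combination (-b) * h1 + (-a) * hA + x * hΔ
        have hd : d = 0 := by linear_combination (-d) * h1 + (-c) * hA + y * hΔ
        exact w.2 (Prod.ext_iff.mpr ⟨hb, hd⟩)
      refine ⟨0, (1 - (x * t - z * y)) * (x * d - b * y)⁻¹, ?_⟩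
      linear_combination (1 - (x * t - z * y)) * mul_inv_cancel₀ hA
    · refine ⟨(1 - (x * d - b * y)) * (a * d - b * c)⁻¹,
        1 - (x * t - z * y) -
          ((1 - (x * d - b * y)) * (a * d - b * c)⁻¹) * (a * t - z * c), ?_⟩
      linear_combination (1 - (x * d - b * y)) * (1 - (x * t - z * y) -
          ((1 - (x * d - b * y)) * (a * d - b * c)⁻¹) * (a * t - z * c)) * mul_inv_cancel₀ hΔ
  have d1 : det₂ v.1 (x + lam * a, y + lam * c) = 1 := by
    simp only [det₂]; linear_combination h1
  have d3 : det₂ (z + mu * b, t + mu * d) w.1 = 1 := by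
    simp only [det₂]; linear_combination h2
  refine ⟨⟨(x + lam * a, y + lam * c), ?_⟩, ⟨(z + mu * b, t + mu * d), ?_⟩, d1, ?_, d3⟩
  · intro h0
    apply (one_ne_zero : (1 : ZMod p) ≠ 0)
    rw [← d1, h0]
    simp [det₂]
  · intro h0
    apply (one_ne_zero : (1 : ZMod p) ≠ 0)
    rw [← d3, h0]
    simp [det₂]
  · simpa only [det₂] using hkey

lemma edist_le_three (xq yq : FV p) : (FGraph p).edist xq yq ≤ 3 := by
  refine Quotient.inductionOn₂ xq yq fun v w => ?_
  obtain ⟨u1, u2, h1, h2, h3⟩ := exists_mid v w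
  have := SimpleGraph.edist_le
    (SimpleGraph.Walk.cons (fadj_mk h1) (.cons (fadj_mk h2) (.cons (fadj_mk h3) .nil)) :
      (FGraph p).Walk (Quotient.mk (fareySetoid p) v) (Quotient.mk (fareySetoid p) w))
  refine this.trans (le_of_eq ?_)
  show ((3 : ℕ) : ℕ∞) = 3
  norm_num

end helpers

/-- For a prime `p ≥ 5`, the Farey graph `M₃(p)` has diameter `3`. -/
theorem farey_diam (p : ℕ) [Fact p.Prime] (hp : 5 ≤ p) :
    (FGraph p).diam = 3 := by
  have h1 : (1 : ZMod p) ≠ 0 := one_ne_zero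
  have h3 : (3 : ZMod p) ≠ 0 := by
    intro h
    have : ((3 : ℕ) : ZMod p) = 0 := by push_cast; exact h
    have := (ZMod.natCast_eq_zero_iff 3 p).mp this
    exact absurd (Nat.le_of_dvd (by norm_num) this) (by omega)
  have hv1 : ((1 : ZMod p), (0 : ZMod p)) ≠ 0 := fun h => h1 (Prod.ext_iff.mp h).1
  have h2 : (2 : ZMod p) ≠ 0 := by
    intro h
    have : ((2 : ℕ) : ZMod p) = 0 := by push_cast; exact h
    have := (ZMod.natCast_eq_zero_iff 2 p).mp this
    exact absurd (Nat.le_of_dvd (by norm_num) this) (by omega)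
  have hv2 : ((2 : ZMod p), (0 : ZMod p)) ≠ 0 := fun h => h2 (Prod.ext_iff.mp h).1
  set V1 : FV p := Quotient.mk (fareySetoid p) ⟨((1 : ZMod p), 0), hv1⟩ with hV1
  set V2 : FV p := Quotient.mk (fareySetoid p) ⟨((2 : ZMod p), 0), hv2⟩ with hV2
  -- V1 ≠ V2
  have hne : V1 ≠ V2 := by
    intro h
    rcases fexact h with h' | h' <;>
    · have := (Prod.ext_iff.mp h').1
      simp only [Prod.fst_neg] at this
      first
      | exact h1 (by linear_combination this)
      | exact h3 (by linear_combination this)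
  -- V1 not adjacent to V2
  have hnadj : ¬ (FGraph p).Adj V1 V2 := by
    intro h
    obtain ⟨w', hw', hd⟩ := fadj_elim h
    have hsnd : w'.1.2 = 0 := by
      rcases fexact hw' with h' | h' <;> rw [h'] <;> simp
    simp only [det₂, hsnd] at hd
    rcases hd with hd | hd
    · exact h1 (by linear_combination -hd)
    · exact h1 (by linear_combination hd)
  -- no common neighbor
  have hnocom : ∀ u : FV p, ¬ ((FGraph p).Adj V1 u ∧ (FGraph p).Adj V2 u) := by
    rintro u ⟨hu1, hu2⟩
    obtain ⟨w1, hw1, hd1⟩ := fadj_elim hu1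
    obtain ⟨w2, hw2, hd2⟩ := fadj_elim hu2
    simp only [det₂] at hd1 hd2
    have he : w1.1.2 = 1 ∨ w1.1.2 = -1 := by
      rcases hd1 with hd | hd
      · exact Or.inl (by linear_combination hd)
      · exact Or.inr (by linear_combination hd)
    have hff : w2.1.2 = w1.1.2 ∨ w2.1.2 = -w1.1.2 := by
      rcases fexact (hw1.symm.trans hw2) with h' | h' <;> rw [h'] <;> simp
    have hf : w2.1.2 = 1 ∨ w2.1.2 = -1 := by
      rcases he with he | he <;> rcases hff with hh | hh <;> rw [hh, he] <;> simp
    have h2f : (2 : ZMod p) * w2.1.2 = 1 ∨ (2 : ZMod p) * w2.1.2 = -1 := by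
      rcases hd2 with hd | hd
      · exact Or.inl (by linear_combination hd)
      · exact Or.inr (by linear_combination hd)
    rcases h2f with h | h <;> rcases hf with hf | hf <;> rw [hf] at h <;>
      first
      | exact h1 (by linear_combination h)
      | exact h1 (by linear_combination -h)
      | exact h3 (by linear_combination h)
      | exact h3 (by linear_combination -h)
  -- lower bound on edist
  have hlow : 3 ≤ (FGraph p).edist V1 V2 := by
    by_contra hlt
    push_neg at hlt
    have hnet : (FGraph p).edist V1 V2 ≠ ⊤ := (hlt.trans_le le_top).ne
    obtain ⟨W, hW⟩ := SimpleGraph.exists_walk_of_edist_ne_top hnet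
    have hlen : W.length < 3 := by
      have : ((W.length : ℕ∞)) < 3 := hW ▸ hlt
      exact_mod_cast this
    have h0 : W.length = 0 ∨ W.length = 1 ∨ W.length = 2 := by omega
    rcases h0 with h0 | h0 | h0
    · exact hne (SimpleGraph.Walk.eq_of_length_eq_zero h0)
    · exact hnadj (SimpleGraph.Walk.adj_of_length_eq_one h0)
    · refine hnocom (W.getVert 1) ⟨?_, ?_⟩
      · have := W.adj_getVert_succ (i := 0) (by omega)
        rwa [SimpleGraph.Walk.getVert_zero] at this
      · have := W.adj_getVert_succ (i := 1) (by omega)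
        have h2' : W.getVert 2 = V2 := by
          rw [← h0]; exact W.getVert_length
        rw [h2'] at this
        exact this.symm
  have hub : (FGraph p).ediam ≤ 3 :=
    SimpleGraph.ediam_le_of_edist_le fun u v => edist_le_three u v
  have hlb : (3 : ℕ∞) ≤ (FGraph p).ediam := le_trans hlow SimpleGraph.edist_le_ediam
  have hed : (FGraph p).ediam = 3 := le_antisymm hub hlb
  simp [SimpleGraph.diam, hed]
end

section
/- For prime p ≥ 5, the concatenation S₂(p) = S (S+1) (S+2) ⋯ (S+p-1), where S = S(p) is the path 1/((p-1)/2), …, 1/2, 2/3, …, ((p-3)/2)/((p-1)/2), is a closed circuit in M₃(p) of length p(p-4), all of whose vertices are at graph distance 2 from [1:0]. -/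
/-- The translation `z ↦ z + k` on homogeneous coordinates: `(a, c) ↦ (a + k·c, c)`. -/
def trPair {p : ℕ} (k : ZMod p) (v : FPair p) : FPair p :=
  ⟨(v.1.1 + k * v.1.2, v.1.2), by
    obtain ⟨⟨a, c⟩, hv⟩ := v
    intro h
    apply hv
    rw [Prod.ext_iff] at h ⊢
    simp only [Prod.fst_zero, Prod.snd_zero] at h ⊢
    obtain ⟨h1, h2⟩ := h
    subst h2
    rw [mul_zero, add_zero] at h1
    exact ⟨h1, rfl⟩⟩

/-- The translation `z ↦ z + k` on vertices of `M₃(p)`. -/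
def trv {p : ℕ} (k : ZMod p) : FV p → FV p :=
  Quotient.map (trPair k) (by
    rintro v w (h | h)
    · left
      show (w.1.1 + k * w.1.2, w.1.2) = (v.1.1 + k * v.1.2, v.1.2)
      rw [h]
    · right
      show (w.1.1 + k * w.1.2, w.1.2) = -(v.1.1 + k * v.1.2, v.1.2)
      rw [h]
      simp [Prod.ext_iff]
      ring)

/-- The path `S(p)`: `1/((p-1)/2), …, 1/3, 1/2, 2/3, …, ((p-3)/2)/((p-1)/2)`,
indexed by `i = 0, …, p-5`. -/
noncomputable def Sfun (p : ℕ) [Fact p.Prime] (i : ℕ) : FV p :=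
  if i + 2 ≤ (p - 1) / 2 then fvq p 1 ((((p - 1) / 2 - i : ℕ)) : ZMod p)
  else fvq p (((i - ((p - 1) / 2 - 2) + 1 : ℕ) : ZMod p))
    (((i - ((p - 1) / 2 - 2) + 2 : ℕ) : ZMod p))

/-- The cyclic sequence `S₂(p) = S (S+1) (S+2) ⋯ (S+p-1)` of period `p(p-4)`. -/
noncomputable def S2fun (p : ℕ) [Fact p.Prime] (j : ℕ) : FV p :=
  trv ((((j % (p * (p - 4))) / (p - 4) : ℕ)) : ZMod p)
    (Sfun p ((j % (p * (p - 4))) % (p - 4)))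


section Aux

open SimpleGraph

variable {p : ℕ} [Fact p.Prime]

lemma fvq_eq_mk (a c : ZMod p) (h : ((a, c) : ZMod p × ZMod p) ≠ 0) :
    fvq p a c = Quotient.mk (fareySetoid p) ⟨(a, c), h⟩ := dif_pos h

lemma snd_ne_zero {a c : ZMod p} (hc : c ≠ 0) : ((a, c) : ZMod p × ZMod p) ≠ 0 :=
  fun h => hc (congrArg Prod.snd h)

lemma adj_fvq {a c b d : ZMod p} (hv : ((a, c) : ZMod p × ZMod p) ≠ 0)
    (hw : ((b, d) : ZMod p × ZMod p) ≠ 0)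
    (h : a * d - b * c = 1 ∨ a * d - b * c = -1) :
    (FGraph p).Adj (fvq p a c) (fvq p b d) := by
  rw [fvq_eq_mk a c hv, fvq_eq_mk b d hw]
  refine ⟨?_, ⟨(a, c), hv⟩, ⟨(b, d), hw⟩, rfl, rfl, h⟩
  intro he
  have hr := Quotient.exact he
  have h0 : a * d - b * c = 0 := by
    rcases hr with h' | h' <;>
    · obtain ⟨hb, hd⟩ := Prod.ext_iff.mp h'
      simp only [Prod.fst_neg, Prod.snd_neg] at hb hd
      rw [hb, hd]; ring
  rcases h with h | h
  · rw [h0] at h; exact zero_ne_one h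
  · rw [h0] at h; exact one_ne_zero (neg_eq_zero.mp h.symm)

lemma trv_fvq (k a c : ZMod p) (hc : c ≠ 0) :
    trv k (fvq p a c) = fvq p (a + k * c) c := by
  rw [fvq_eq_mk a c (snd_ne_zero hc), fvq_eq_mk (a + k * c) c (snd_ne_zero hc)]
  exact Quotient.sound (Or.inl rfl)

lemma cast_ne_bad {c₀ : ℕ} (hp : 5 ≤ p) (h2 : 2 ≤ c₀) (hm : c₀ ≤ (p - 1) / 2) :
    (c₀ : ZMod p) ≠ 0 ∧ (c₀ : ZMod p) ≠ 1 ∧ (c₀ : ZMod p) ≠ -1 := by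
  have hpd : ∀ x : ℕ, 0 < x → x < p → ¬ (p ∣ x) := by
    intro x h1 h2 hd
    have := Nat.le_of_dvd h1 hd; omega
  refine ⟨?_, ?_, ?_⟩
  · rw [Ne, ZMod.natCast_eq_zero_iff]
    exact hpd c₀ (by omega) (by omega)
  · intro h
    have hz : ((c₀ - 1 : ℕ) : ZMod p) = 0 := by
      rw [Nat.cast_sub (by omega : 1 ≤ c₀), h, Nat.cast_one, sub_self]
    rw [ZMod.natCast_eq_zero_iff] at hz
    exact hpd _ (by omega) (by omega) hz
  · intro h
    have hz : ((c₀ + 1 : ℕ) : ZMod p) = 0 := by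
      push_cast; rw [h]; ring
    rw [ZMod.natCast_eq_zero_iff] at hz
    exact hpd _ (by omega) (by omega) hz

lemma Sfun_first {i : ℕ} (hi : i + 2 ≤ (p - 1) / 2) :
    Sfun p i = fvq p 1 ((((p - 1) / 2 - i : ℕ)) : ZMod p) := by
  unfold Sfun; rw [if_pos hi]

lemma Sfun_second {i : ℕ} (hi : ¬ (i + 2 ≤ (p - 1) / 2)) :
    Sfun p i = fvq p (((i - ((p - 1) / 2 - 2) + 1 : ℕ) : ZMod p))
      (((i - ((p - 1) / 2 - 2) + 2 : ℕ) : ZMod p)) := by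
  unfold Sfun; rw [if_neg hi]

lemma podd (hp : 5 ≤ p) : p % 2 = 1 := by
  rcases (Fact.out : p.Prime).eq_two_or_odd with h | h
  · omega
  · exact h

lemma step_adj (hp : 5 ≤ p) {i : ℕ} (hi : i + 1 < p - 4) (k : ZMod p) :
    (FGraph p).Adj (trv k (Sfun p i)) (trv k (Sfun p (i + 1))) := by
  have hodd := podd hp
  by_cases h1 : i + 3 ≤ (p - 1) / 2
  · -- both in first branch
    rw [Sfun_first (by omega), Sfun_first h1]
    rw [trv_fvq _ _ _ (cast_ne_bad hp (by omega) (by omega)).1,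
        trv_fvq _ _ _ (cast_ne_bad hp (by omega) (by omega)).1]
    apply adj_fvq (snd_ne_zero (cast_ne_bad hp (by omega) (by omega)).1)
      (snd_ne_zero (cast_ne_bad hp (by omega) (by omega)).1)
    right
    have key : (((p - 1) / 2 - i : ℕ) : ZMod p)
        = (((p - 1) / 2 - (i + 1) : ℕ) : ZMod p) + 1 := by
      rw [show (p - 1) / 2 - i = ((p - 1) / 2 - (i + 1)) + 1 from by omega]
      push_cast; ring
    rw [key]; ring
  · by_cases h2 : i + 2 ≤ (p - 1) / 2
    · -- junction: i = (p-1)/2 - 2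
      rw [Sfun_first h2, Sfun_second (by omega)]
      rw [show (p - 1) / 2 - i = 2 from by omega,
          show i + 1 - ((p - 1) / 2 - 2) + 1 = 2 from by omega,
          show i + 1 - ((p - 1) / 2 - 2) + 2 = 3 from by omega]
      rw [trv_fvq _ _ _ (cast_ne_bad hp (by omega) (by omega)).1,
          trv_fvq _ _ _ (cast_ne_bad hp (by omega) (by omega)).1]
      apply adj_fvq (snd_ne_zero (cast_ne_bad hp (by omega) (by omega)).1)
        (snd_ne_zero (cast_ne_bad hp (by omega) (by omega)).1)
      right
      push_cast
      ring
    · -- both in second branch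
      rw [Sfun_second h2, Sfun_second (by omega)]
      set t := i - ((p - 1) / 2 - 2) with ht
      have hti : (p - 1) / 2 - 2 ≤ i := by omega
      rw [show i + 1 - ((p - 1) / 2 - 2) + 1 = t + 2 from by omega,
          show i + 1 - ((p - 1) / 2 - 2) + 2 = t + 3 from by omega]
      have hb1 : 2 ≤ t + 2 ∧ t + 2 ≤ (p - 1) / 2 := by omega
      have hb2 : 2 ≤ t + 3 ∧ t + 3 ≤ (p - 1) / 2 := by omega
      rw [trv_fvq _ _ _ (cast_ne_bad hp hb1.1 hb1.2).1,
          trv_fvq _ _ _ (cast_ne_bad hp hb2.1 hb2.2).1]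
      apply adj_fvq (snd_ne_zero (cast_ne_bad hp hb1.1 hb1.2).1)
        (snd_ne_zero (cast_ne_bad hp hb2.1 hb2.2).1)
      right
      push_cast
      ring

lemma Sfun_zero (hp : 5 ≤ p) :
    Sfun p 0 = fvq p 1 ((((p - 1) / 2 : ℕ)) : ZMod p) := by
  have hodd := podd hp
  rw [Sfun_first (by omega), Nat.sub_zero]

lemma Sfun_last (hp : 5 ≤ p) :
    Sfun p (p - 5) = fvq p ((((p - 1) / 2 - 1 : ℕ)) : ZMod p)
      ((((p - 1) / 2 : ℕ)) : ZMod p) := by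
  have hodd := podd hp
  by_cases h : (p - 1) / 2 = 2
  · rw [Sfun_first (by omega)]
    rw [show (p - 1) / 2 - (p - 5) = (p - 1) / 2 from by omega,
        show (p - 1) / 2 - 1 = 1 from by omega, Nat.cast_one]
  · rw [Sfun_second (by omega)]
    rw [show p - 5 - ((p - 1) / 2 - 2) + 1 = (p - 1) / 2 - 1 from by omega,
        show p - 5 - ((p - 1) / 2 - 2) + 2 = (p - 1) / 2 from by omega]

lemma cast_half_mul_two (hp : 5 ≤ p) :
    ((((p - 1) / 2 : ℕ)) : ZMod p) * 2 = -1 := by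
  have hodd := podd hp
  have h1 : (((p - 1) / 2 * 2 : ℕ) : ZMod p) = ((p - 1 : ℕ) : ZMod p) := by
    rw [show (p - 1) / 2 * 2 = p - 1 from by omega]
  have h2 : ((p - 1 : ℕ) : ZMod p) = -1 := by
    rw [Nat.cast_sub (by omega : 1 ≤ p), Nat.cast_one, ZMod.natCast_self]; ring
  rw [h2] at h1
  push_cast at h1
  exact h1

lemma wrap_adj (hp : 5 ≤ p) (k : ZMod p) :
    (FGraph p).Adj (trv k (Sfun p (p - 5))) (trv (k + 1) (Sfun p 0)) := by
  have hodd := podd hp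
  have hmne : ((((p - 1) / 2 : ℕ)) : ZMod p) ≠ 0 :=
    (cast_ne_bad hp (by omega) (by omega)).1
  rw [Sfun_last hp, Sfun_zero hp, trv_fvq _ _ _ hmne, trv_fvq _ _ _ hmne]
  apply adj_fvq (snd_ne_zero hmne) (snd_ne_zero hmne)
  left
  have hm1 : (((p - 1) / 2 - 1 : ℕ) : ZMod p) = (((p - 1) / 2 : ℕ) : ZMod p) - 1 := by
    rw [Nat.cast_sub (by omega : 1 ≤ (p - 1) / 2), Nat.cast_one]
  rw [hm1]
  linear_combination -(cast_half_mul_two hp)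

lemma Sfun_form (hp : 5 ≤ p) {i : ℕ} (hi : i < p - 4) :
    ∃ (a : ZMod p) (c₀ : ℕ), 2 ≤ c₀ ∧ c₀ ≤ (p - 1) / 2 ∧
      Sfun p i = fvq p a ((c₀ : ℕ) : ZMod p) := by
  have hodd := podd hp
  by_cases h : i + 2 ≤ (p - 1) / 2
  · exact ⟨1, (p - 1) / 2 - i, by omega, by omega, Sfun_first h⟩
  · exact ⟨_, i - ((p - 1) / 2 - 2) + 2, by omega, by omega, Sfun_second h⟩

lemma dist_two (hp : 5 ≤ p) (a c : ZMod p) (h0 : c ≠ 0) (h1 : c ≠ 1)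
    (h2 : c ≠ -1) : (FGraph p).dist (fvq p 1 0) (fvq p a c) = 2 := by
  have hx : ((1, 0) : ZMod p × ZMod p) ≠ 0 := fun h => one_ne_zero (congrArg Prod.fst h)
  have adj1 : (FGraph p).Adj (fvq p 1 0) (fvq p ((a + 1) * c⁻¹) 1) :=
    adj_fvq hx (snd_ne_zero one_ne_zero) (Or.inl (by ring))
  have adj2 : (FGraph p).Adj (fvq p ((a + 1) * c⁻¹) 1) (fvq p a c) := by
    apply adj_fvq (snd_ne_zero one_ne_zero) (snd_ne_zero h0)
    left
    rw [mul_assoc, inv_mul_cancel₀ h0]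
    ring
  have w : (FGraph p).Walk (fvq p 1 0) (fvq p a c) :=
    SimpleGraph.Walk.cons adj1 (SimpleGraph.Walk.cons adj2 SimpleGraph.Walk.nil)
  have hle : (FGraph p).dist (fvq p 1 0) (fvq p a c) ≤ 2 := by
    have := SimpleGraph.dist_le
      (SimpleGraph.Walk.cons adj1 (SimpleGraph.Walk.cons adj2 SimpleGraph.Walk.nil))
    simpa using this
  have hne : fvq p 1 0 ≠ fvq p a c := by
    rw [fvq_eq_mk _ _ hx, fvq_eq_mk _ _ (snd_ne_zero h0)]
    intro h
    rcases Quotient.exact h with h' | h' <;>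
    · obtain ⟨ha, hc⟩ := Prod.ext_iff.mp h'
      simp only [Prod.fst_neg, Prod.snd_neg, neg_zero] at ha hc
      exact h0 hc
  have hnadj : ¬ (FGraph p).Adj (fvq p 1 0) (fvq p a c) := by
    intro had
    obtain ⟨_, v, w', hxv, hyw, hdet⟩ := had
    rw [fvq_eq_mk _ _ hx] at hxv
    rw [fvq_eq_mk _ _ (snd_ne_zero h0)] at hyw
    have hv := Quotient.exact hxv
    have hw := Quotient.exact hyw
    have hc : c = 1 ∨ c = -1 := by
      rcases hv with h' | h' <;> rcases hw with h'' | h'' <;>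
        rw [show (det₂ v.1 w'.1 : ZMod p) = det₂ v.1 w'.1 from rfl] at hdet <;>
        rw [h', h''] at hdet <;>
        simp only [det₂, Prod.fst_neg, Prod.snd_neg, one_mul, mul_zero, neg_zero,
          zero_mul, sub_zero, mul_neg, neg_mul, neg_neg, neg_eq_iff_eq_neg] at hdet <;>
        tauto
    rcases hc with h' | h'
    · exact h1 h'
    · exact h2 h'
  have hne0 : (FGraph p).dist (fvq p 1 0) (fvq p a c) ≠ 0 := by
    intro h
    rcases SimpleGraph.dist_eq_zero_iff_eq_or_not_reachable.mp h with h' | h'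
    · exact hne h'
    · exact h' ⟨w⟩
  have hne1 : (FGraph p).dist (fvq p 1 0) (fvq p a c) ≠ 1 := fun h =>
    hnadj (SimpleGraph.dist_eq_one_iff_adj.mp h)
  omega

end Aux

/-- For prime `p ≥ 5`, the concatenation `S₂(p) = S (S+1) ⋯ (S+p-1)` is a closed circuit in
`M₃(p)` of length `p(p-4)`, all of whose vertices lie at graph distance 2 from `[1:0]`. -/
theorem S2_circuit (p : ℕ) [Fact p.Prime] (hp : 5 ≤ p) :
    Function.Periodic (S2fun p) (p * (p - 4)) ∧
    (∀ j : ℕ, (FGraph p).Adj (S2fun p j) (S2fun p (j + 1))) ∧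
    (∀ j : ℕ, (FGraph p).dist (fvq p 1 0) (S2fun p j) = 2) := by
  have hodd := podd hp
  have hn : 0 < p - 4 := by omega
  refine ⟨?_, ?_, ?_⟩
  · intro x
    simp only [S2fun, Nat.add_mod_right]
  · intro j
    simp only [S2fun]
    set n := p - 4 with hn4
    set N := p * n with hNdef
    have hr : j % N < N := Nat.mod_lt _ (Nat.mul_pos (by omega) hn)
    have hk : j % N / n < p := by
      rw [Nat.div_lt_iff_lt_mul hn]
      exact hr
    have hi : j % N % n < n := Nat.mod_lt _ hn
    have hsplit : N = n * (j % N / n) + j % N % n + (N - j % N) := by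
      have := Nat.div_add_mod (j % N) n
      omega
    set k := j % N / n with hkdef
    set i := j % N % n with hidef
    have hj1 : (j + 1) % N = (j % N + 1) % N := by
      conv_lhs => rw [Nat.add_mod]
      have h1N : 1 < N := by
        calc 1 < p := by omega
        _ ≤ p * n := Nat.le_mul_of_pos_right _ hn
      rw [Nat.mod_eq_of_lt h1N]
    have hsum : j % N = n * k + i := (Nat.div_add_mod (j % N) n).symm
    have hkp : n * (k + 1) ≤ n * p := Nat.mul_le_mul_left n hk
    have hexp : n * (k + 1) = n * k + n := by ring
    have hNc : N = n * p := by rw [hNdef, Nat.mul_comm]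
    by_cases hlast : i + 1 < n
    · have hlt : n * k + (i + 1) < N := by omega
      have h1 : (j + 1) % N = n * k + (i + 1) := by
        rw [hj1, hsum, show n * k + i + 1 = n * k + (i + 1) from by omega,
          Nat.mod_eq_of_lt hlt]
      have hdiv : (j + 1) % N / n = k := by
        rw [h1, Nat.mul_add_div hn, Nat.div_eq_of_lt hlast, add_zero]
      have hmod : (j + 1) % N % n = i + 1 := by
        rw [h1, Nat.mul_add_mod, Nat.mod_eq_of_lt hlast]
      rw [hdiv, hmod]
      exact step_adj hp (by omega) _
    · have hieq : i = p - 5 := by omega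
      have h1 : j % N + 1 = n * (k + 1) := by omega
      by_cases hkl : k + 1 < p
      · have hlt : n * (k + 1) < N := by
          have he2 : n * p = n * (k + 1) + n * (p - (k + 1)) := by
            rw [← Nat.mul_add]
            congr 1
            omega
          have he3 : 0 < n * (p - (k + 1)) := Nat.mul_pos hn (by omega)
          omega
        have hmodN : (j + 1) % N = n * (k + 1) := by
          rw [hj1, h1, Nat.mod_eq_of_lt hlt]
        have hdiv : (j + 1) % N / n = k + 1 := by
          rw [hmodN, Nat.mul_div_cancel_left _ hn]
        have hmod : (j + 1) % N % n = 0 := by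
          rw [hmodN, Nat.mul_mod_right]
        rw [hdiv, hmod, hieq, show ((k + 1 : ℕ) : ZMod p) = (k : ZMod p) + 1 from by
          push_cast; ring, show (0 : ℕ) = p - 5 - (p - 5) from by omega]
        have h0 : p - 5 - (p - 5) = 0 := by omega
        rw [h0]
        exact wrap_adj hp _
      · have hkeq : k + 1 = p := by omega
        have hmodN : (j + 1) % N = 0 := by
          rw [hj1, h1, hkeq, ← hNc, Nat.mod_self]
        have hdiv : (j + 1) % N / n = 0 := by rw [hmodN]; exact Nat.zero_div n
        have hmod : (j + 1) % N % n = 0 := by rw [hmodN]; exact Nat.zero_mod n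
        have hc : ((0 : ℕ) : ZMod p) = (k : ZMod p) + 1 := by
          have h2 : ((k + 1 : ℕ) : ZMod p) = 0 := by rw [hkeq, ZMod.natCast_self]
          push_cast at h2
          rw [Nat.cast_zero, ← h2]
        rw [hdiv, hmod, hieq, hc]
        exact wrap_adj hp _
  · intro j
    simp only [S2fun]
    obtain ⟨a, c₀, h2, hm, hS⟩ :=
      Sfun_form hp (Nat.mod_lt (j % (p * (p - 4))) hn : j % (p * (p - 4)) % (p - 4) < p - 4)
    rw [hS, trv_fvq _ _ _ (cast_ne_bad hp h2 hm).1]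
    obtain ⟨e0, e1, e2⟩ := cast_ne_bad hp h2 hm
    exact dist_two hp _ _ e0 e1 e2
end
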